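/- There exist ε₀ > 0 and C ≥ 1, depending only on a, b, c, such that for every Q ∈ 𝒬₀ with d(Q) := inf_{P ∈ 𝒩} |Q − P| < ε₀ one has (1/C) d(Q)² ≤ f̃_B(Q) ≤ C d(Q)². -/

import Mathlib

open Matrix Finset

noncomputable section

abbrev Mat := Matrix (Fin 3) (Fin 3) ℝ
abbrev Vec3 := Fin 3 → ℝ

/-- The Frobenius inner product `A : B`. -/
def frob (A B : Mat) : ℝ := ∑ i : Fin 3, ∑ j : Fin 3, A i j * B i j

/-- The squared Frobenius norm `|A|²`. -/
def mnormSq (A : Mat) : ℝ := frob A A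

/-- `s₊ = (b + √(b² + 24 a c)) / (4c)`. -/
def sPlus (a b c : ℝ) : ℝ := (b + Real.sqrt (b ^ 2 + 24 * a * c)) / (4 * c)

/-- `J(Q) = (a − c|Q|²)Q + bQ² − (b/3)|Q|² Id`. -/
def Jmap (a b c : ℝ) (Q : Mat) : Mat :=
  (a - c * mnormSq Q) • Q + b • (Q * Q) - (b / 3 * mnormSq Q) • (1 : Mat)

/-- The bulk energy `f_B(Q) = −(a/2)|Q|² − (b/3)tr(Q³) + (c/4)|Q|⁴`. -/
def fB (a b c : ℝ) (Q : Mat) : ℝ :=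
  -(a / 2) * mnormSq Q - b / 3 * (Q * Q * Q).trace + c / 4 * mnormSq Q ^ 2

/-- The normalized (nonnegative) bulk energy `f̃_B`. -/
def ftB (a b c : ℝ) (Q : Mat) : ℝ :=
  fB a b c Q + a * sPlus a b c ^ 2 / 3 + 2 * b * sPlus a b c ^ 3 / 27 - c * sPlus a b c ^ 4 / 9

/-- The limit manifold `𝒩 = { s₊(n⊗n − Id/3) : |n| = 1 }`. -/
def NSet (a b c : ℝ) : Set Mat :=
  {Q | ∃ n : Vec3, n ⬝ᵥ n = 1 ∧ Q = sPlus a b c • (vecMulVec n n - (1 / 3 : ℝ) • (1 : Mat))}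

/-- The space `𝒬₀` of symmetric traceless 3×3 matrices, as a submodule. -/
def Q0 : Submodule ℝ Mat where
  carrier := {A | A.IsSymm ∧ A.trace = 0}
  add_mem' := by
    rintro A B ⟨hA1, hA2⟩ ⟨hB1, hB2⟩
    exact ⟨hA1.add hB1, by simp [Matrix.trace_add, hA2, hB2]⟩
  zero_mem' := ⟨by simp [Matrix.IsSymm], by simp⟩
  smul_mem' := by
    rintro r A ⟨hA1, hA2⟩
    refine ⟨?_, by simp [Matrix.trace_smul, hA2]⟩
    unfold Matrix.IsSymm
    rw [Matrix.transpose_smul, hA1]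

/-- Distance (in Frobenius norm) from `Q` to the manifold `𝒩`. -/
def distN (a b c : ℝ) (Q : Mat) : ℝ :=
  sInf ((fun P => Real.sqrt (mnormSq (Q - P))) '' NSet a b c)


-- ========== auxiliary lemmas ==========

open RealInnerProductSpace in
private lemma exists_eigvec' (Q : Mat) (hQ : Q.IsHermitian) (i₀ : Fin 3) :
    ∃ n : Fin 3 → ℝ, n ⬝ᵥ n = 1 ∧ n ⬝ᵥ (Q *ᵥ n) = hQ.eigenvalues i₀ := by
  have hnorm := hQ.eigenvectorBasis.orthonormal.1 i₀
  have h1 : ⟪hQ.eigenvectorBasis i₀, hQ.eigenvectorBasis i₀⟫ = 1 := by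
    rw [real_inner_self_eq_norm_sq, hnorm]; norm_num
  have h2 : (⇑(hQ.eigenvectorBasis i₀) : Fin 3 → ℝ) ⬝ᵥ ⇑(hQ.eigenvectorBasis i₀) = 1 := by
    rw [← h1]
    simp [PiLp.inner_apply, dotProduct, RCLike.inner_apply, mul_comm]
    rw [PiLp.inner_apply] at h1
    simpa [RCLike.inner_apply, mul_comm, sq] using h1
  refine ⟨⇑(hQ.eigenvectorBasis i₀), h2, ?_⟩
  rw [hQ.mulVec_eigenvectorBasis i₀, dotProduct_smul]
  simp [h2]

private lemma sPlus_pos' {a b c : ℝ} (ha : 0 < a) (hb : 0 < b) (hc : 0 < c) :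
    0 < sPlus a b c := by
  unfold sPlus
  have := Real.sqrt_nonneg (b ^ 2 + 24 * a * c)
  positivity

private lemma sPlus_rel' {a b c : ℝ} (ha : 0 < a) (hb : 0 < b) (hc : 0 < c) :
    2 * c * sPlus a b c ^ 2 = b * sPlus a b c + 3 * a := by
  have hnn : (0:ℝ) ≤ b ^ 2 + 24 * a * c := by positivity
  set t := Real.sqrt (b ^ 2 + 24 * a * c) with ht
  have ht2 : t ^ 2 = b ^ 2 + 24 * a * c := Real.sq_sqrt hnn
  unfold sPlus
  rw [← ht]
  have hc' : (4*c) ≠ 0 := by positivity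
  field_simp
  linear_combination 2 * ht2

private lemma exists_spec' (Q : Mat) (hQ : Q.IsHermitian) :
    ∃ U : Mat, star U * U = 1 ∧ U * star U = 1 ∧
      Q = U * diagonal hQ.eigenvalues * star U := by
  refine ⟨(hQ.eigenvectorUnitary : Mat), ?_, ?_, ?_⟩
  · exact mem_unitaryGroup_iff'.mp (hQ.eigenvectorUnitary).2
  · exact mem_unitaryGroup_iff.mp (hQ.eigenvectorUnitary).2
  · simpa [RCLike.ofReal_real_eq_id] using hQ.spectral_theorem

private lemma trace_conj' (U D : Mat) (hUl : star U * U = 1) :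
    (U * D * star U).trace = D.trace := by
  rw [trace_mul_cycle, hUl, one_mul]

private lemma trace_pows' (Q : Mat) (hQ : Q.IsHermitian) :
    Q.trace = ∑ i, hQ.eigenvalues i ∧
    (Q * Q).trace = ∑ i, hQ.eigenvalues i ^ 2 ∧
    (Q * Q * Q).trace = ∑ i, hQ.eigenvalues i ^ 3 := by
  obtain ⟨U, hUl, hUr, hspec⟩ := exists_spec' Q hQ
  set D := diagonal hQ.eigenvalues with hD
  have h2 : Q * Q = U * (D * D) * star U := by
    rw [hspec]
    calc U * D * star U * (U * D * star U) = U * D * (star U * U) * D * star U := by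
            noncomm_ring
      _ = U * (D * D) * star U := by rw [hUl]; noncomm_ring
  have h3 : Q * Q * Q = U * (D * D * D) * star U := by
    rw [h2, hspec]
    calc U * (D * D) * star U * (U * D * star U) = U * (D * D) * (star U * U) * D * star U := by
            noncomm_ring
      _ = U * (D * D * D) * star U := by rw [hUl]; noncomm_ring
  refine ⟨?_, ?_, ?_⟩
  · conv_lhs => rw [hspec]
    rw [trace_conj' _ _ hUl, hD, trace_diagonal]
  · conv_lhs => rw [h2]
    rw [trace_conj' _ _ hUl, hD, diagonal_mul_diagonal, trace_diagonal]
    exact Finset.sum_congr rfl fun i _ => (sq _).symm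
  · conv_lhs => rw [h3]
    rw [trace_conj' _ _ hUl, hD, diagonal_mul_diagonal, diagonal_mul_diagonal, trace_diagonal]
    exact Finset.sum_congr rfl fun i _ => by ring

private lemma mnormSq_symm' (Q : Mat) (hsymm : Q.IsSymm) : mnormSq Q = (Q * Q).trace := by
  have h : ∀ i j, Q j i = Q i j := fun i j => by
    have := congr_fun (congr_fun hsymm i) j
    simpa [Matrix.transpose_apply] using this
  simp only [mnormSq, frob, Matrix.trace, Matrix.diag, mul_apply, Fin.sum_univ_three]
  linear_combination (Q 1 0 - Q 0 1) * h 0 1 + (Q 2 0 - Q 0 2) * h 0 2 + (Q 2 1 - Q 1 2) * h 1 2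

private lemma rayleigh_le' (Q : Mat) (hQ : Q.IsHermitian) (M : ℝ)
    (hM : ∀ i, hQ.eigenvalues i ≤ M)
    (n : Fin 3 → ℝ) (hn : n ⬝ᵥ n = 1) : n ⬝ᵥ (Q *ᵥ n) ≤ M := by
  obtain ⟨U, hUl, hUr, hspec⟩ := exists_spec' Q hQ
  set lam := hQ.eigenvalues with hlam
  set m : Fin 3 → ℝ := star U *ᵥ n with hm
  have hmU : ∀ i, m i = U 0 i * n 0 + U 1 i * n 1 + U 2 i * n 2 := by
    intro i
    simp [hm, mulVec, dotProduct, Fin.sum_univ_three, star_apply]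
  have key1 : n ⬝ᵥ (Q *ᵥ n) = ∑ i, lam i * m i ^ 2 := by
    conv_lhs => rw [hspec]
    rw [← mulVec_mulVec, ← mulVec_mulVec, ← hm]
    have hDn : (diagonal lam) *ᵥ m = fun i => lam i * m i := by
      funext i; exact mulVec_diagonal lam m i
    rw [hDn]
    simp only [dotProduct, mulVec, Fin.sum_univ_three, hmU]
    ring
  have key2 : ∑ i, m i ^ 2 = 1 := by
    have hUr' : ∀ j k, (U * star U) j k = (1 : Mat) j k := fun j k => by rw [hUr]
    have h : ∀ j k, U j 0 * U k 0 + U j 1 * U k 1 + U j 2 * U k 2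
        = if j = k then (1:ℝ) else 0 := by
      intro j k
      have := hUr' j k
      simpa [mul_apply, star_apply, Fin.sum_univ_three, one_apply] using this
    have hdot : n 0 * n 0 + n 1 * n 1 + n 2 * n 2 = 1 := by
      simpa [dotProduct, Fin.sum_univ_three] using hn
    have h00 := h 0 0; have h01 := h 0 1; have h02 := h 0 2
    have h11 := h 1 1; have h12 := h 1 2; have h22 := h 2 2
    rw [if_pos rfl] at h00 h11 h22
    rw [if_neg (by decide)] at h01 h02 h12
    simp only [Fin.sum_univ_three, hmU]
    linear_combination (n 0 * n 0) * h00 + (2 * n 0 * n 1) * h01 + (2 * n 0 * n 2) * h02 +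
      (n 1 * n 1) * h11 + (2 * n 1 * n 2) * h12 + (n 2 * n 2) * h22 + hdot
  rw [key1]
  calc ∑ i, lam i * m i ^ 2 ≤ ∑ i, M * m i ^ 2 :=
        Finset.sum_le_sum fun i _ => mul_le_mul_of_nonneg_right (hM i) (sq_nonneg _)
    _ = M := by rw [← Finset.mul_sum, key2, mul_one]

private lemma dist_sq_expand' (Q : Mat) (htr : Q.trace = 0) (s : ℝ) (n : Fin 3 → ℝ)
    (hn : n ⬝ᵥ n = 1) :
    mnormSq (Q - s • (vecMulVec n n - (1/3 : ℝ) • (1 : Mat)))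
      = mnormSq Q - 2*s*(n ⬝ᵥ (Q *ᵥ n)) + 2*s^2/3 := by
  have htr' : Q 0 0 + Q 1 1 + Q 2 2 = 0 := by
    simpa [Matrix.trace, Matrix.diag, Fin.sum_univ_three] using htr
  have hn' : n 0 * n 0 + n 1 * n 1 + n 2 * n 2 = 1 := by
    simpa [dotProduct, Fin.sum_univ_three] using hn
  simp only [mnormSq, frob, mulVec, dotProduct, Fin.sum_univ_three, Matrix.sub_apply, Matrix.smul_apply,
    vecMulVec_apply, one_apply, smul_eq_mul, Fin.reduceEq, reduceIte]
  norm_num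
  linear_combination (2*s/3) * htr' + (s^2*(n 0^2 + n 1^2 + n 2^2 + 1/3)) * hn'

private lemma distN_eq' (a b c : ℝ) (Q : Mat) (hQ : Q.IsHermitian) (htr : Q.trace = 0)
    (hs : 0 ≤ sPlus a b c) (i₀ : Fin 3)
    (hmax : ∀ i, hQ.eigenvalues i ≤ hQ.eigenvalues i₀) :
    distN a b c Q
      = Real.sqrt (mnormSq Q - 2*sPlus a b c*hQ.eigenvalues i₀ + 2*sPlus a b c^2/3) := by
  have hbdd : BddBelow ((fun P => Real.sqrt (mnormSq (Q - P))) '' NSet a b c) := by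
    refine ⟨0, ?_⟩
    rintro x ⟨P, _, rfl⟩
    exact Real.sqrt_nonneg _
  apply le_antisymm
  · obtain ⟨v, hv1, hv2⟩ := exists_eigvec' Q hQ i₀
    have hmem : sPlus a b c • (vecMulVec v v - (1/3 : ℝ) • (1 : Mat)) ∈ NSet a b c :=
      ⟨v, hv1, rfl⟩
    have hval : Real.sqrt (mnormSq (Q - sPlus a b c • (vecMulVec v v - (1/3 : ℝ) • (1 : Mat))))
        = Real.sqrt (mnormSq Q - 2*sPlus a b c*hQ.eigenvalues i₀ + 2*sPlus a b c^2/3) := by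
      rw [dist_sq_expand' Q htr (sPlus a b c) v hv1, hv2]
    exact hval ▸ csInf_le hbdd ⟨_, hmem, rfl⟩
  · apply le_csInf
    · refine ⟨_, Set.mem_image_of_mem _ (⟨![1,0,0], ?_, rfl⟩ : _ ∈ NSet a b c)⟩
      norm_num [dotProduct, Fin.sum_univ_three]
      rfl
    · rintro x ⟨P, ⟨n, hn, rfl⟩, rfl⟩
      dsimp only
      rw [dist_sq_expand' Q htr (sPlus a b c) n hn]
      apply Real.sqrt_le_sqrt
      have hray := rayleigh_le' Q hQ (hQ.eigenvalues i₀) hmax n hn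
      nlinarith [hs, hray]

private lemma abs_bds' {x r : ℝ} (hr : 0 ≤ r) (h : x^2 ≤ r^2) : -r ≤ x ∧ x ≤ r := by
  constructor <;> nlinarith

private lemma cube_bds' {x r : ℝ} (hl : -r ≤ x) (hu : x ≤ r) :
    -(r*x^2) ≤ x^3 ∧ x^3 ≤ r*x^2 := by
  constructor
  · nlinarith [mul_nonneg (sq_nonneg x) (by linarith : (0:ℝ) ≤ x + r)]
  · nlinarith [mul_nonneg (sq_nonneg x) (by linarith : (0:ℝ) ≤ r - x)]

set_option maxHeartbeats 1000000 in
private lemma scalar_core' {a b c s m : ℝ}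
    (ha : 0 < a) (hb : 0 < b) (hc : 0 < c) (hs : 0 < s)
    (hm0 : 0 < m) (hm1 : m ≤ 3*a/2) (hm2 : m ≤ b*s/2)
    (e1 e2 e3 r : ℝ) (hr0 : 0 ≤ r) (hr2 : r ^ 2 = e1^2 + e2^2 + e3^2)
    (hr1 : r < 1) (hrm : r < m/(2*(b/3 + c*s))) :
    1 / (2/m + (3*a/2 + b*s/2) + (b/3 + c*s) + c/4) * r ^ 2
        ≤ 3*a/2*e1^2 + b*s/2*(e2^2+e3^2) - b/3*(e1^3+e2^3+e3^3)
        + c*s*e1*(e1^2+e2^2+e3^2) + c/4*(e1^2+e2^2+e3^2)^2 ∧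
      3*a/2*e1^2 + b*s/2*(e2^2+e3^2) - b/3*(e1^3+e2^3+e3^3)
        + c*s*e1*(e1^2+e2^2+e3^2) + c/4*(e1^2+e2^2+e3^2)^2
        ≤ (2/m + (3*a/2 + b*s/2) + (b/3 + c*s) + c/4) * r ^ 2 := by
  have hK0 : (0:ℝ) < b/3 + c*s := by positivity
  have hCpos : (0:ℝ) < 2/m + (3*a/2 + b*s/2) + (b/3 + c*s) + c/4 := by positivity
  have hC2m : 2/m ≤ 2/m + (3*a/2 + b*s/2) + (b/3 + c*s) + c/4 := by
    have h1 : (0:ℝ) < 3*a/2 + b*s/2 := by positivity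
    have h2 : (0:ℝ) < c/4 := by positivity
    linarith
  have hKr : (b/3 + c*s) * r ≤ m/2 := by
    rw [lt_div_iff₀ (by positivity : (0:ℝ) < 2*(b/3 + c*s))] at hrm
    nlinarith
  have he1sq : e1^2 ≤ r^2 := by nlinarith [sq_nonneg e2, sq_nonneg e3]
  obtain ⟨he1l, he1u⟩ := abs_bds' hr0 he1sq
  obtain ⟨he2l, he2u⟩ := abs_bds' hr0 (by nlinarith [sq_nonneg e1, sq_nonneg e3] : e2^2 ≤ r^2)
  obtain ⟨he3l, he3u⟩ := abs_bds' hr0 (by nlinarith [sq_nonneg e1, sq_nonneg e2] : e3^2 ≤ r^2)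
  obtain ⟨b1l, b1u⟩ := cube_bds' he1l he1u
  obtain ⟨b2l, b2u⟩ := cube_bds' he2l he2u
  obtain ⟨b3l, b3u⟩ := cube_bds' he3l he3u
  have hr3 : r*(e1^2+e2^2+e3^2) = r^3 := by rw [← hr2]; ring
  have hcube_u : e1^3 + e2^3 + e3^3 ≤ r^3 := by linarith
  have hcube_l : -(r^3) ≤ e1^3 + e2^3 + e3^3 := by linarith
  have hcs0 : (0:ℝ) ≤ c*s*r^2 := by positivity
  have hcs_l : -(c*s) * r^3 ≤ c*s*e1*(e1^2+e2^2+e3^2) := by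
    rw [← hr2]
    linarith [mul_le_mul_of_nonneg_left he1l hcs0]
  have hcs_u : c*s*e1*(e1^2+e2^2+e3^2) ≤ c*s * r^3 := by
    rw [← hr2]
    linarith [mul_le_mul_of_nonneg_left he1u hcs0]
  have hb3_l : -(b/3) * r^3 ≤ -(b/3) * (e1^3+e2^3+e3^3) := by
    have := mul_le_mul_of_nonneg_left hcube_u (by positivity : (0:ℝ) ≤ b/3)
    linarith
  have hb3_u : -(b/3) * (e1^3+e2^3+e3^3) ≤ b/3 * r^3 := by
    have := mul_le_mul_of_nonneg_left hcube_l (by positivity : (0:ℝ) ≤ b/3)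
    linarith
  have hq4 : c/4*(e1^2+e2^2+e3^2)^2 = c/4 * r^4 := by rw [← hr2]; ring
  have hq4_l : (0:ℝ) ≤ c/4*(e1^2+e2^2+e3^2)^2 := by positivity
  have hmr : m*r^2 = m*(e1^2+e2^2+e3^2) := by rw [hr2]
  have hquad_lb : m * r^2 ≤ 3*a/2*e1^2 + b*s/2*(e2^2+e3^2) := by
    have p1 := mul_le_mul_of_nonneg_right hm1 (sq_nonneg e1)
    have p2 := mul_le_mul_of_nonneg_right hm2 (sq_nonneg e2)
    have p3 := mul_le_mul_of_nonneg_right hm2 (sq_nonneg e3)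
    linarith
  have hbsr : (b*s/2)*r^2 = (b*s/2)*(e1^2+e2^2+e3^2) := by rw [hr2]
  have hquad_ub : 3*a/2*e1^2 + b*s/2*(e2^2+e3^2) ≤ (3*a/2 + b*s/2) * r^2 := by
    have p1 := mul_le_mul_of_nonneg_left he1sq (by positivity : (0:ℝ) ≤ 3*a/2)
    have p2 : (0:ℝ) ≤ (b*s/2)*e1^2 := by positivity
    linarith
  have hKr3 : (b/3 + c*s) * r^3 ≤ m/2 * r^2 := by
    have := mul_le_mul_of_nonneg_right hKr (sq_nonneg r)
    have hrr : ((b/3 + c*s) * r) * r^2 = (b/3 + c*s) * r^3 := by ring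
    linarith [this]
  constructor
  · have h1C : 1/(2/m + (3*a/2 + b*s/2) + (b/3 + c*s) + c/4) ≤ m/2 := by
      have h0 : (0:ℝ) < 2/m := by positivity
      have h1 := one_div_le_one_div_of_le h0 hC2m
      have h2 : 1/(2/m) = m/2 := by rw [one_div_div]
      linarith
    have := mul_le_mul_of_nonneg_right h1C (sq_nonneg r)
    linarith [hquad_lb, hb3_l, hcs_l, hq4_l, hKr3]
  · have h3 : r^3 ≤ r^2 := by
      have := mul_le_mul_of_nonneg_right (le_of_lt hr1) (sq_nonneg r)
      linarith
    have h4 : r^4 ≤ r^2 := by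
      have := mul_le_mul_of_nonneg_right h3 hr0
      linarith
    have h2mr : (0:ℝ) ≤ 2/m * r^2 := by positivity
    have p1 := mul_le_mul_of_nonneg_left h3 (le_of_lt hK0)
    have p2 := mul_le_mul_of_nonneg_left h4 (by positivity : (0:ℝ) ≤ c/4)
    linarith [hquad_ub, hb3_u, hcs_u, hq4]

private lemma eig_ident' (a b c s l0 l1 l2 : ℝ) (hsum : l0 + l1 + l2 = 0)
    (hrel : 2*c*s^2 = b*s + 3*a) :
    -(a/2)*(l0^2+l1^2+l2^2) - b/3*(l0^3+l1^3+l2^3) + c/4*(l0^2+l1^2+l2^2)^2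
      + a*s^2/3 + 2*b*s^3/27 - c*s^4/9
    = 3*a/2*(l0 - 2*s/3)^2 + b*s/2*((l1 + s/3)^2+(l2 + s/3)^2)
      - b/3*((l0 - 2*s/3)^3+(l1 + s/3)^3+(l2 + s/3)^3)
      + c*s*(l0 - 2*s/3)*((l0 - 2*s/3)^2+(l1 + s/3)^2+(l2 + s/3)^2)
      + c/4*((l0 - 2*s/3)^2+(l1 + s/3)^2+(l2 + s/3)^2)^2 := by
  have h2 : l2 = -l0 - l1 := by linarith
  subst h2
  linear_combination ((l0 - 2*s/3)^2/2 + ((l0 - 2*s/3)^2+(l1 + s/3)^2+(-l0-l1 + s/3)^2)/6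
    + s*(l0 - 2*s/3)/3) * hrel

private lemma sq_ident' (s l0 l1 l2 : ℝ) (hsum : l0 + l1 + l2 = 0) :
    l0^2+l1^2+l2^2 - 2*s*l0 + 2*s^2/3
      = (l0-2*s/3)^2 + (l1+s/3)^2 + (l2+s/3)^2 := by
  linear_combination (-2*s/3) * hsum

private lemma final_core' {a b c s m : ℝ}
    (ha : 0 < a) (hb : 0 < b) (hc : 0 < c) (hs : 0 < s)
    (hrel : 2*c*s^2 = b*s + 3*a)
    (hm0 : 0 < m) (hm1 : m ≤ 3*a/2) (hm2 : m ≤ b*s/2)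
    {F2 F3 l0 l1 l2 d : ℝ} (hsum : l0 + l1 + l2 = 0)
    (hF2 : F2 = l0^2+l1^2+l2^2) (hF3 : F3 = l0^3+l1^3+l2^3)
    (hd : d = Real.sqrt (F2 - 2*s*l0 + 2*s^2/3))
    (hr1 : d < 1) (hrm : d < m/(2*(b/3 + c*s))) :
    1 / (2/m + (3*a/2 + b*s/2) + (b/3 + c*s) + c/4) * d ^ 2
      ≤ -(a/2)*F2 - b/3*F3 + c/4*F2^2 + a*s^2/3 + 2*b*s^3/27 - c*s^4/9 ∧
    -(a/2)*F2 - b/3*F3 + c/4*F2^2 + a*s^2/3 + 2*b*s^3/27 - c*s^4/9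
      ≤ (2/m + (3*a/2 + b*s/2) + (b/3 + c*s) + c/4) * d ^ 2 := by
  have hnn : 0 ≤ F2 - 2*s*l0 + 2*s^2/3 := by
    rw [hF2]
    have h := sq_ident' s l0 l1 l2 hsum
    rw [show l0^2+l1^2+l2^2 - 2*s*l0 + 2*s^2/3
      = (l0-2*s/3)^2 + (l1+s/3)^2 + (l2+s/3)^2 from h]
    positivity
  have hd0 : 0 ≤ d := hd ▸ Real.sqrt_nonneg _
  have hd2 : d^2 = F2 - 2*s*l0 + 2*s^2/3 := by rw [hd]; exact Real.sq_sqrt hnn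
  have hr2 : d^2 = (l0-2*s/3)^2 + (l1+s/3)^2 + (l2+s/3)^2 := by
    rw [hd2, hF2]; exact sq_ident' s l0 l1 l2 hsum
  have hcore := scalar_core' ha hb hc hs hm0 hm1 hm2 (l0-2*s/3) (l1+s/3) (l2+s/3) d hd0
    hr2 hr1 hrm
  rw [hF2, hF3, eig_ident' a b c s l0 l1 l2 hsum hrel]
  exact hcore

private lemma one_le_C' {a b c s : ℝ} (ha : 0 < a) (hb : 0 < b) (hc : 0 < c) (hs : 0 < s) :
    1 ≤ 2/(min (3*a/2) (b*s/2)) + (3*a/2 + b*s/2) + (b/3 + c*s) + c/4 := by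
  have hm0 : 0 < min (3*a/2) (b*s/2) := by positivity
  have hK0 : (0:ℝ) < b/3 + c*s := by positivity
  rcases le_or_gt (min (3*a/2) (b*s/2)) 2 with h | h
  · have h3 : (1:ℝ) ≤ 2/(min (3*a/2) (b*s/2)) := by rw [le_div_iff₀ hm0]; linarith
    have h1 : (0:ℝ) < 3*a/2 + b*s/2 := by positivity
    have h2 : (0:ℝ) < c/4 := by positivity
    linarith
  · have h3 : (0:ℝ) ≤ 2/(min (3*a/2) (b*s/2)) := by positivity
    have h1 : min (3*a/2) (b*s/2) ≤ 3*a/2 := min_le_left _ _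
    have h4 : (0:ℝ) < b*s/2 := by positivity
    have h2 : (0:ℝ) < c/4 := by positivity
    linarith

/-- Equivalence of the normalized bulk energy and the squared distance to `𝒩`:
there exist `ε₀ > 0` and `C ≥ 1` such that for all symmetric traceless `Q` with
`d(Q) = dist(Q,𝒩) < ε₀`, one has `(1/C) d(Q)² ≤ f̃_B(Q) ≤ C d(Q)²`. -/
theorem ftB_equivalent_distSq
    (a b c : ℝ) (ha : 0 < a) (hb : 0 < b) (hc : 0 < c) :
    ∃ ε₀ > 0, ∃ C : ℝ, 1 ≤ C ∧
      ∀ Q : Mat, Q.IsSymm → Q.trace = 0 → distN a b c Q < ε₀ →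
        1 / C * distN a b c Q ^ 2 ≤ ftB a b c Q ∧
          ftB a b c Q ≤ C * distN a b c Q ^ 2 := by
  have hs := sPlus_pos' ha hb hc
  have hrel := sPlus_rel' ha hb hc
  have hm0 : 0 < min (3*a/2) (b*sPlus a b c/2) := by positivity
  have hK0 : (0:ℝ) < b/3 + c*sPlus a b c := by positivity
  refine ⟨min 1 (min (3*a/2) (b*sPlus a b c/2) / (2*(b/3 + c*sPlus a b c))), by positivity,
    2/(min (3*a/2) (b*sPlus a b c/2)) + (3*a/2 + b*sPlus a b c/2)
      + (b/3 + c*sPlus a b c) + c/4,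
    one_le_C' ha hb hc hs, ?_⟩
  intro Q hsym htr hdist
  have hQ : Q.IsHermitian := by
    rw [Matrix.IsHermitian, conjTranspose_eq_transpose_of_trivial]; exact hsym
  obtain ⟨i₀, -, hmaxmem⟩ :=
    Finset.exists_max_image Finset.univ hQ.eigenvalues ⟨0, Finset.mem_univ 0⟩
  have hmax : ∀ i, hQ.eigenvalues i ≤ hQ.eigenvalues i₀ :=
    fun i => hmaxmem i (Finset.mem_univ i)
  obtain ⟨ht1, ht2, ht3⟩ := trace_pows' Q hQ
  have hp2 : mnormSq Q
      = hQ.eigenvalues 0 ^2 + hQ.eigenvalues 1 ^2 + hQ.eigenvalues 2 ^2 := by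
    rw [mnormSq_symm' Q hsym, ht2, Fin.sum_univ_three]
  have hp3 : (Q*Q*Q).trace
      = hQ.eigenvalues 0 ^3 + hQ.eigenvalues 1 ^3 + hQ.eigenvalues 2 ^3 := by
    rw [ht3, Fin.sum_univ_three]
  have hsum : hQ.eigenvalues 0 + hQ.eigenvalues 1 + hQ.eigenvalues 2 = 0 := by
    have h := ht1
    rw [htr, Fin.sum_univ_three] at h
    linarith
  have hdeq := distN_eq' a b c Q hQ htr (le_of_lt hs) i₀ hmax
  have hft : ftB a b c Q = -(a/2)*(mnormSq Q) - b/3*((Q*Q*Q).trace)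
      + c/4*(mnormSq Q)^2
      + a*(sPlus a b c)^2/3 + 2*b*(sPlus a b c)^3/27 - c*(sPlus a b c)^4/9 := by
    simp only [ftB, fB]
  have hr1 : distN a b c Q < 1 := lt_of_lt_of_le hdist (min_le_left _ _)
  have hrm : distN a b c Q
      < min (3*a/2) (b*sPlus a b c/2) / (2*(b/3 + c*sPlus a b c)) :=
    lt_of_lt_of_le hdist (min_le_right _ _)
  rw [hft]
  fin_cases i₀
  · exact final_core' ha hb hc hs hrel hm0 (min_le_left _ _) (min_le_right _ _)
      hsum hp2 hp3 hdeq hr1 hrm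
  · exact final_core' ha hb hc hs hrel hm0 (min_le_left _ _) (min_le_right _ _)
      (by linarith : hQ.eigenvalues 1 + hQ.eigenvalues 0 + hQ.eigenvalues 2 = 0)
      (by rw [hp2]; ring) (by rw [hp3]; ring) hdeq hr1 hrm
  · exact final_core' ha hb hc hs hrel hm0 (min_le_left _ _) (min_le_right _ _)
      (by linarith : hQ.eigenvalues 2 + hQ.eigenvalues 0 + hQ.eigenvalues 1 = 0)
      (by rw [hp2]; ring) (by rw [hp3]; ring) hdeq hr1 hrm
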